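/- Tweedie's identity: if Y = X + √t·N with N ∼ N(0, Id) independent of X, and p_t denotes the density of Y, then E[X | Y = y] = y + t·∇ log p_t(y). -/

import Mathlib

open MeasureTheory

/-- Multivariate Gaussian density `G(μ,Σ)(x)` on Euclidean space `ℝ^d`. -/
noncomputable def gaussE {d : ℕ} (μ : EuclideanSpace ℝ (Fin d))
    (S : Matrix (Fin d) (Fin d) ℝ) (x : EuclideanSpace ℝ (Fin d)) : ℝ :=
  ((2 * Real.pi) ^ d * S.det) ^ (-(1:ℝ)/2) *
    Real.exp (-(1/2) * dotProduct (fun i => x i - μ i)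
      (S⁻¹.mulVec (fun i => x i - μ i)))

noncomputable def gK (d : ℕ) (t : ℝ) (x z : EuclideanSpace ℝ (Fin d)) : ℝ :=
  ((2 * Real.pi) ^ d * t ^ d) ^ (-(1:ℝ)/2) * Real.exp (-(2*t)⁻¹ * ‖z - x‖^2)

lemma gaussE_eq {d : ℕ} {t : ℝ} (ht : 0 < t) (x z : EuclideanSpace ℝ (Fin d)) :
    gaussE x (t • 1) z = gK d t x z := by
  have hdet : (t • (1 : Matrix (Fin d) (Fin d) ℝ)).det = t ^ d := by
    simp [Matrix.det_smul]
  have hinv : (t • (1 : Matrix (Fin d) (Fin d) ℝ))⁻¹ = t⁻¹ • 1 := by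
    apply Matrix.inv_eq_right_inv
    rw [Matrix.smul_mul, Matrix.mul_smul, Matrix.one_mul, smul_smul,
      mul_inv_cancel₀ ht.ne']
    simp
  have hns : ‖z - x‖^2 = dotProduct (fun i => z i - x i) (fun i => z i - x i) := by
    rw [EuclideanSpace.norm_sq_eq]
    simp [dotProduct, sq]
  unfold gaussE gK
  rw [hdet, hinv]
  congr 1
  rw [Matrix.smul_mulVec, Matrix.one_mulVec, dotProduct_smul, hns]
  congr 1
  rw [smul_eq_mul, mul_inv]
  ring

lemma gK_pos {d : ℕ} {t : ℝ} (ht : 0 < t) (x z : EuclideanSpace ℝ (Fin d)) :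
    0 < gK d t x z := by
  unfold gK
  have : (0:ℝ) < (2 * Real.pi) ^ d * t ^ d := by positivity
  exact mul_pos (Real.rpow_pos_of_pos this _) (Real.exp_pos _)

lemma gK_le {d : ℕ} {t : ℝ} (ht : 0 < t) (x z : EuclideanSpace ℝ (Fin d)) :
    gK d t x z ≤ ((2 * Real.pi) ^ d * t ^ d) ^ (-(1:ℝ)/2) := by
  unfold gK
  have h1 : Real.exp (-(2*t)⁻¹ * ‖z - x‖^2) ≤ 1 := by
    rw [Real.exp_le_one_iff]
    have : (0:ℝ) ≤ (2*t)⁻¹ * ‖z - x‖^2 := by positivity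
    linarith
  have h2 : (0:ℝ) < ((2 * Real.pi) ^ d * t ^ d) ^ (-(1:ℝ)/2) :=
    Real.rpow_pos_of_pos (by positivity) _
  nlinarith

lemma gK_cont {d : ℕ} (t : ℝ) (z : EuclideanSpace ℝ (Fin d)) :
    Continuous (fun x => gK d t x z) := by
  unfold gK
  fun_prop

lemma gK_hasFDerivAt {d : ℕ} {t : ℝ} (ht : 0 < t) (x z : EuclideanSpace ℝ (Fin d)) :
    HasFDerivAt (fun w => gK d t x w)
      ((-(t⁻¹) * gK d t x z) • (innerSL ℝ (z - x))) z := by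
  have h0 : HasFDerivAt (fun w : EuclideanSpace ℝ (Fin d) => w - x)
      (ContinuousLinearMap.id ℝ _) z := (hasFDerivAt_id z).sub_const x
  have h1 := h0.norm_sq
  have h2 := h1.const_mul (-(2*t)⁻¹)
  have h3 := h2.exp
  have h4 := h3.const_mul (((2 * Real.pi) ^ d * t ^ d) ^ (-(1:ℝ)/2))
  refine h4.congr_fderiv ?_
  ext w
  simp only [gK, ContinuousLinearMap.smul_apply, innerSL_apply_apply,
    ContinuousLinearMap.coe_smul', Pi.smul_apply, smul_eq_mul,
    ContinuousLinearMap.coe_comp', Function.comp_apply, ContinuousLinearMap.coe_id', id_eq]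
  rw [two_smul]
  field_simp
  ring

set_option maxHeartbeats 1000000 in
set_option synthInstance.maxHeartbeats 400000 in
theorem tweedie_aux {d : ℕ} (μ : Measure (EuclideanSpace ℝ (Fin d))) [IsProbabilityMeasure μ]
    (hcs : ∃ K : Set (EuclideanSpace ℝ (Fin d)), IsCompact K ∧ μ Kᶜ = 0)
    (t : ℝ) (ht : 0 < t) (y : EuclideanSpace ℝ (Fin d)) :
    (∫ x, gK d t x y • x ∂μ) =
      (∫ x, gK d t x y ∂μ) •
        (y + t • gradient (fun z => Real.log (∫ x, gK d t x z ∂μ)) y) := by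
  obtain ⟨K, hKc, hK0⟩ := hcs
  obtain ⟨R, hR⟩ := hKc.isBounded.exists_norm_le
  set C : ℝ := ((2 * Real.pi) ^ d * t ^ d) ^ (-(1:ℝ)/2) with hC
  have haeK : ∀ᵐ x ∂μ, x ∈ K := by
    rw [ae_iff]; exact hK0
  have hmeas : ∀ z, AEStronglyMeasurable (fun x => gK d t x z) μ :=
    fun z => (gK_cont t z).aestronglyMeasurable
  -- integrabilities
  have hint_g : ∀ z, Integrable (fun x => gK d t x z) μ := by
    intro z
    refine Integrable.mono' (integrable_const C) (hmeas z) ?_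
    filter_upwards with x
    rw [Real.norm_eq_abs, abs_of_pos (gK_pos ht x z)]
    exact gK_le ht x z
  have hint_gx : Integrable (fun x => gK d t x y • x) μ := by
    refine Integrable.mono' (integrable_const (C * R)) ?_ ?_
    · exact ((gK_cont t y).smul continuous_id).aestronglyMeasurable
    · filter_upwards [haeK] with x hx
      rw [norm_smul, Real.norm_eq_abs, abs_of_pos (gK_pos ht x y)]
      exact mul_le_mul (gK_le ht x y) (hR x hx) (norm_nonneg x)
        (Real.rpow_pos_of_pos (by positivity) _).le
  have hint_gyx : Integrable (fun x => (-(t⁻¹) * gK d t x y) • (y - x)) μ := by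
    refine Integrable.mono' (integrable_const (t⁻¹ * C * (‖y‖ + R))) ?_ ?_
    · exact ((continuous_const.mul (gK_cont t y)).smul
        (continuous_const.sub continuous_id)).aestronglyMeasurable
    · filter_upwards [haeK] with x hx
      rw [norm_smul, Real.norm_eq_abs, abs_mul, abs_neg, abs_inv,
        abs_of_pos ht, abs_of_pos (gK_pos ht x y)]
      have h1 : ‖y - x‖ ≤ ‖y‖ + R := by
        have := norm_sub_le y x
        have := hR x hx
        linarith
      have h2 : t⁻¹ * gK d t x y ≤ t⁻¹ * C :=
        mul_le_mul_of_nonneg_left (gK_le ht x y) (by positivity)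
      calc t⁻¹ * gK d t x y * ‖y - x‖ ≤ (t⁻¹ * C) * (‖y‖ + R) := by
            apply mul_le_mul h2 h1 (norm_nonneg _)
            positivity
        _ = t⁻¹ * C * (‖y‖ + R) := by ring
  -- differentiation under the integral sign
  have key : HasFDerivAt (fun z => ∫ x, gK d t x z ∂μ)
      (∫ x, (-(t⁻¹) * gK d t x y) • (innerSL ℝ (y - x)) ∂μ) y := by
    apply hasFDerivAt_integral_of_dominated_of_fderiv_le
      (F' := fun z x => (-(t⁻¹) * gK d t x z) • (innerSL ℝ (z - x)))
      (bound := fun _ => t⁻¹ * C * (‖y‖ + 1 + R)) (Metric.ball_mem_nhds y zero_lt_one)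
    · filter_upwards with z using hmeas z
    · exact hint_g y
    · apply Continuous.aestronglyMeasurable
      exact (continuous_const.mul (gK_cont t y)).smul
        ((innerSL ℝ).continuous.comp (continuous_const.sub continuous_id))
    · filter_upwards [haeK] with x hx z hz
      apply le_trans (ContinuousLinearMap.opNorm_smul_le _ _)
      rw [innerSL_apply_norm, Real.norm_eq_abs, abs_mul, abs_neg, abs_inv,
        abs_of_pos ht, abs_of_pos (gK_pos ht x z)]
      have h1 : ‖z - x‖ ≤ ‖y‖ + 1 + R := by
        have e1 : ‖z - x‖ ≤ ‖z - y‖ + ‖y - x‖ := norm_sub_le_norm_sub_add_norm_sub z y x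
        have e2 : ‖z - y‖ < 1 := by rwa [Metric.mem_ball, dist_eq_norm] at hz
        have e3 : ‖y - x‖ ≤ ‖y‖ + ‖x‖ := norm_sub_le y x
        have := hR x hx
        linarith
      have h2 : t⁻¹ * gK d t x z ≤ t⁻¹ * C :=
        mul_le_mul_of_nonneg_left (gK_le ht x z) (by positivity)
      calc t⁻¹ * gK d t x z * ‖z - x‖ ≤ (t⁻¹ * C) * (‖y‖ + 1 + R) := by
            apply mul_le_mul h2 h1 (norm_nonneg _)
            positivity
        _ = t⁻¹ * C * (‖y‖ + 1 + R) := by ring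
    · exact integrable_const _
    · filter_upwards with x z _ using gK_hasFDerivAt ht x z
  -- gradient of p
  have hGd : HasGradientAt (fun z => ∫ x, gK d t x z ∂μ)
      (∫ x, (-(t⁻¹) * gK d t x y) • (y - x) ∂μ) y := by
    rw [hasGradientAt_iff_hasFDerivAt]
    refine key.congr_fderiv ?_
    have hcomm := (InnerProductSpace.toDual ℝ (EuclideanSpace ℝ (Fin d))).toLinearIsometry.integral_comp_comm
      (μ := μ) (fun x => (-(t⁻¹) * gK d t x y) • (y - x))
    simp only [LinearIsometryEquiv.coe_toLinearIsometry] at hcomm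
    rw [← hcomm]
    refine integral_congr_ae (Filter.Eventually.of_forall fun x => ?_)
    ext w
    simp [InnerProductSpace.toDual_apply_apply, real_inner_smul_left]
  set G : EuclideanSpace ℝ (Fin d) := ∫ x, (-(t⁻¹) * gK d t x y) • (y - x) ∂μ with hG
  -- positivity
  have hppos : 0 < ∫ x, gK d t x y ∂μ := by
    rw [integral_pos_iff_support_of_nonneg (fun x => (gK_pos ht x y).le) (hint_g y)]
    have hs : Function.support (fun x => gK d t x y) = Set.univ := by
      ext x; simp [Function.mem_support, (gK_pos ht x y).ne']
    rw [hs]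
    simp
  -- gradient of log p
  have hgrad : gradient (fun z => Real.log (∫ x, gK d t x z ∂μ)) y
      = (∫ x, gK d t x y ∂μ)⁻¹ • G := by
    apply HasGradientAt.gradient
    rw [hasGradientAt_iff_hasFDerivAt]
    have h := (Real.hasDerivAt_log hppos.ne').comp_hasFDerivAt y hGd.hasFDerivAt
    refine h.congr_fderiv ?_
    exact (map_smul _ _ _).symm
  rw [hgrad]
  have hsc : (∫ x, gK d t x y ∂μ) • (t • ((∫ x, gK d t x y ∂μ)⁻¹ • G)) = t • G := by
    rw [smul_smul, smul_smul, mul_comm, ← mul_assoc, inv_mul_cancel₀ hppos.ne', one_mul]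
  rw [smul_add, hsc, hG, ← integral_smul]
  have h1 : ∀ x : EuclideanSpace ℝ (Fin d),
      t • ((-(t⁻¹) * gK d t x y) • (y - x)) = gK d t x y • x - gK d t x y • y := by
    intro x
    rw [smul_smul]
    have e : t * (-(t⁻¹) * gK d t x y) = -(gK d t x y) := by
      rw [neg_mul, mul_neg, ← mul_assoc, mul_inv_cancel₀ ht.ne', one_mul]
    rw [e, neg_smul, smul_sub, neg_sub]
  simp only [h1]
  rw [integral_sub hint_gx ((hint_g y).smul_const y), integral_smul_const]
  abel

/-- Tweedie's identity: if `Y = X + √t·N` with `N ∼ N(0,Id)` independent of `X ∼ μ`, so that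
`Y` has density `p_t(y) = ∫ G(x, t·Id)(y) dμ(x)`, then the posterior mean satisfies
`E[X | Y = y] = y + t·∇ log p_t(y)`, i.e. (multiplying by `p_t(y)`)
`∫ G(x,t·Id)(y) x dμ(x) = p_t(y) (y + t ∇ log p_t(y))`. -/
theorem tweedie {d : ℕ} (μ : Measure (EuclideanSpace ℝ (Fin d))) [IsProbabilityMeasure μ]
    (hcs : ∃ K : Set (EuclideanSpace ℝ (Fin d)), IsCompact K ∧ μ Kᶜ = 0)
    (t : ℝ) (ht : 0 < t) (y : EuclideanSpace ℝ (Fin d)) :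
    (∫ x, gaussE x (t • 1) y • x ∂μ) =
      (∫ x, gaussE x (t • 1) y ∂μ) •
        (y + t • gradient (fun z => Real.log (∫ x, gaussE x (t • 1) z ∂μ)) y) := by
  simp only [gaussE_eq ht]
  exact tweedie_aux μ hcs t ht y
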